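/- If all elements of a finite branched continued fraction with independent variables are positive real numbers, then the sequence of approximants satisfies the fork property: for all m, the even approximants increase and the odd approximants decrease, with every even approximant less than or equal to every odd approximant, i.e. f_{2m} ≤ f_{2m+2} ≤ f_{2k+1} ≤ f_{2k−1} for all applicable indices m, k. -/

import Mathlib

/-- The tails of a branched continued fraction with independent variables:
`tailR a b fuel l` is the value of the part of the fraction hanging below the
branch `l = [i_k, …, i_1]` (head = innermost index), computed to depth `fuel`:
`Σ_{i_{k+1} ≤ i_k} a(i(k+1)) / (b(i(k+1)) + tail)`. -/
noncomputable def tailR {N : ℕ} (a b : List (Fin N) → ℝ) : ℕ → List (Fin N) → ℝ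
  | 0, _ => 0
  | fuel + 1, l =>
    match l with
    | [] => 0
    | ik :: _ =>
      ∑ j ∈ Finset.Iic ik, a (j :: l) / (b (j :: l) + tailR a b fuel (j :: l))

/-- The `k`-th approximant
`f_k = b₀ + Σ_{i_1=1}^N a_{i(1)}/(b_{i(1)} + Σ_{i_2≤i_1} a_{i(2)}/(… ))`. -/
noncomputable def approxR {N : ℕ} (b0 : ℝ) (a b : List (Fin N) → ℝ) : ℕ → ℝ
  | 0 => b0
  | k + 1 => b0 + ∑ i : Fin N, a [i] / (b [i] + tailR a b k [i])

section Aux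

variable {N : ℕ}

variable (a b : List (Fin N) → ℝ) in

lemma tailR_nonneg (ha : ∀ l : List (Fin N), 0 < a l) (hb : ∀ l : List (Fin N), 0 < b l) : ∀ fuel (l : List (Fin N)), 0 ≤ tailR a b fuel l := by
  intro fuel
  induction fuel with
  | zero => intro l; simp [tailR]
  | succ f ih =>
    intro l
    cases l with
    | nil => simp [tailR]
    | cons ik rest =>
      simp only [tailR]
      apply Finset.sum_nonneg
      intro j hj
      exact div_nonneg (ha _).le (add_nonneg (hb _).le (ih _))

lemma tailR_anti (a b : List (Fin N) → ℝ)
    (ha : ∀ l : List (Fin N), 0 < a l) (hb : ∀ l : List (Fin N), 0 < b l) {m n : ℕ}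
    (h : ∀ l : List (Fin N), tailR a b m l ≤ tailR a b n l) :
    ∀ l : List (Fin N), tailR a b (n + 1) l ≤ tailR a b (m + 1) l := by
  intro l
  cases l with
  | nil => simp [tailR]
  | cons ik rest =>
    simp only [tailR]
    apply Finset.sum_le_sum
    intro j hj
    apply div_le_div_of_nonneg_left (ha _).le
    · exact add_pos_of_pos_of_nonneg (hb _) (tailR_nonneg a b ha hb _ _)
    · exact add_le_add_right (h _) _

lemma tailR_triple (a b : List (Fin N) → ℝ)
    (ha : ∀ l : List (Fin N), 0 < a l) (hb : ∀ l : List (Fin N), 0 < b l) : ∀ m : ℕ,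
    (∀ l : List (Fin N), tailR a b (2 * m) l ≤ tailR a b (2 * m + 2) l) ∧
    (∀ l : List (Fin N), tailR a b (2 * m + 3) l ≤ tailR a b (2 * m + 1) l) ∧
    (∀ l : List (Fin N), tailR a b (2 * m) l ≤ tailR a b (2 * m + 1) l) := by
  intro m
  induction m with
  | zero =>
    have h1 : ∀ l : List (Fin N), tailR a b 0 l ≤ tailR a b 2 l := by
      intro l; simp only [tailR]; exact tailR_nonneg a b ha hb 2 l
    have h3 : ∀ l : List (Fin N), tailR a b 0 l ≤ tailR a b 1 l := by
      intro l; simp only [tailR]; exact tailR_nonneg a b ha hb 1 l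
    exact ⟨h1, tailR_anti a b ha hb h1, h3⟩
  | succ m ih =>
    obtain ⟨h1, h2, h3⟩ := ih
    have e1 : 2 * (m + 1) = 2 * m + 2 := by ring
    have h1' : ∀ l : List (Fin N),
        tailR a b (2 * (m + 1)) l ≤ tailR a b (2 * (m + 1) + 2) l := by
      have := tailR_anti a b ha hb h2
      intro l
      show tailR a b (2 * m + 1 + 1) l ≤ tailR a b (2 * m + 3 + 1) l
      exact this l
    have h3' : ∀ l : List (Fin N),
        tailR a b (2 * (m + 1)) l ≤ tailR a b (2 * (m + 1) + 1) l := by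
      have := tailR_anti a b ha hb (tailR_anti a b ha hb h3)
      intro l
      show tailR a b (2 * m + 1 + 1) l ≤ tailR a b (2 * m + 1 + 1 + 1) l
      exact this l
    exact ⟨h1', tailR_anti a b ha hb h1', h3'⟩

lemma tailR_even_mono (a b : List (Fin N) → ℝ)
    (ha : ∀ l : List (Fin N), 0 < a l) (hb : ∀ l : List (Fin N), 0 < b l) {m n : ℕ} (hmn : m ≤ n) :
    ∀ l : List (Fin N), tailR a b (2 * m) l ≤ tailR a b (2 * n) l := by
  induction n with
  | zero =>
    have : m = 0 := by omega
    subst this; intro l; exact le_rfl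
  | succ n ih =>
    rcases Nat.lt_or_ge m (n + 1) with h | h
    · intro l
      have step := (tailR_triple a b ha hb n).1 l
      have e : 2 * (n + 1) = 2 * n + 2 := by ring
      rw [e]
      exact le_trans (ih (by omega) l) step
    · have : m = n + 1 := by omega
      subst this; intro l; exact le_rfl

lemma tailR_odd_anti (a b : List (Fin N) → ℝ)
    (ha : ∀ l : List (Fin N), 0 < a l) (hb : ∀ l : List (Fin N), 0 < b l) {m n : ℕ} (hmn : m ≤ n) :
    ∀ l : List (Fin N), tailR a b (2 * n + 1) l ≤ tailR a b (2 * m + 1) l := by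
  induction n with
  | zero =>
    have : m = 0 := by omega
    subst this; intro l; exact le_rfl
  | succ n ih =>
    rcases Nat.lt_or_ge m (n + 1) with h | h
    · intro l
      have step := (tailR_triple a b ha hb n).2.1 l
      have e : 2 * (n + 1) + 1 = 2 * n + 3 := by ring
      rw [e]
      exact le_trans step (ih (by omega) l)
    · have : m = n + 1 := by omega
      subst this; intro l; exact le_rfl

lemma tailR_even_le_odd (a b : List (Fin N) → ℝ)
    (ha : ∀ l : List (Fin N), 0 < a l) (hb : ∀ l : List (Fin N), 0 < b l) (m k : ℕ) :
    ∀ l : List (Fin N), tailR a b (2 * m) l ≤ tailR a b (2 * k + 1) l := by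
  intro l
  rcases Nat.le_total m k with h | h
  · exact le_trans (tailR_even_mono a b ha hb h l)
      ((tailR_triple a b ha hb k).2.2 l)
  · exact le_trans ((tailR_triple a b ha hb m).2.2 l)
      (tailR_odd_anti a b ha hb h l)

lemma approxR_anti (a b : List (Fin N) → ℝ)
    (ha : ∀ l : List (Fin N), 0 < a l) (hb : ∀ l : List (Fin N), 0 < b l) (b0 : ℝ) {m n : ℕ}
    (h : ∀ l : List (Fin N), tailR a b m l ≤ tailR a b n l) :
    approxR b0 a b (n + 1) ≤ approxR b0 a b (m + 1) := by
  simp only [approxR]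
  apply add_le_add_right
  apply Finset.sum_le_sum
  intro i _
  apply div_le_div_of_nonneg_left (ha _).le
  · exact add_pos_of_pos_of_nonneg (hb _) (tailR_nonneg a b ha hb _ _)
  · exact add_le_add_right (h _) _

end Aux

/-- Fork property: if all elements of a branched continued fraction with
independent variables are positive, then the even approximants increase, the
odd approximants decrease, and every even approximant is ≤ every odd one:
`f_{2m} ≤ f_{2m+2} ≤ f_{2k+1} ≤ f_{2k−1}`. -/
theorem fork_property {N : ℕ} (b0 : ℝ) (a b : List (Fin N) → ℝ)
    (ha : ∀ l : List (Fin N), 0 < a l) (hb : ∀ l : List (Fin N), 0 < b l)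
    (hb0 : 0 < b0) :
    (∀ m : ℕ, approxR b0 a b (2 * m) ≤ approxR b0 a b (2 * m + 2)) ∧
    (∀ k : ℕ, approxR b0 a b (2 * k + 3) ≤ approxR b0 a b (2 * k + 1)) ∧
    (∀ m k : ℕ, approxR b0 a b (2 * m) ≤ approxR b0 a b (2 * k + 1)) := by
  have approx_le_succ : ∀ n : ℕ, approxR b0 a b 0 ≤ approxR b0 a b (n + 1) := by
    intro n
    simp only [approxR]
    have : (0:ℝ) ≤ ∑ i : Fin N, a [i] / (b [i] + tailR a b n [i]) := by
      apply Finset.sum_nonneg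
      intro i _
      exact div_nonneg (ha _).le
        (add_nonneg (hb _).le (tailR_nonneg a b ha hb _ _))
    linarith
  refine ⟨?_, ?_, ?_⟩
  · intro m
    cases m with
    | zero => simpa using approx_le_succ 1
    | succ m =>
      have h := approxR_anti a b ha hb b0 (tailR_triple a b ha hb m).2.1
      show approxR b0 a b (2 * m + 1 + 1) ≤ approxR b0 a b (2 * m + 3 + 1)
      exact h
  · intro k
    have h := approxR_anti a b ha hb b0 (tailR_triple a b ha hb k).1
    have e1 : 2 * k + 3 = 2 * k + 2 + 1 := by ring
    rw [e1]
    exact h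
  · intro m k
    cases m with
    | zero => simpa using approx_le_succ (2 * k)
    | succ m =>
      have h := approxR_anti a b ha hb b0 (tailR_even_le_odd a b ha hb k m)
      show approxR b0 a b (2 * m + 1 + 1) ≤ approxR b0 a b (2 * k + 1)
      exact h
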